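/- arXiv:1103.2774 — 3 statements merged into one kernel-verified Lean document; each statement's English description precedes it below -/
import Mathlib

section
/- Let π, σ ∈ ℝ^n be unit vectors with strictly positive entries, γ > 0, ε_k = min(π_k, γσ_k), and suppose p := (σᵀ·ε / ‖ε‖₂)² satisfies p ≥ (σᵀ·ε)/γ (equivalently ‖ε‖₂² ≤ γ σᵀ·ε, which holds since ε_k ≤ γσ_k). Then (σᵀ·ε) · (∑_{k=1}^n σ_k π_k² / ε_k) ≤ p. -/
theorem stmt_7 (n : ℕ) (π σ : Fin n → ℝ)
    (hπ : ∑ k, (π k) ^ 2 = 1) (hσ : ∑ k, (σ k) ^ 2 = 1)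
    (hπpos : ∀ k, 0 < π k) (hσpos : ∀ k, 0 < σ k)
    (γ : ℝ) (hγ : 0 < γ) (ε : Fin n → ℝ) (hε : ∀ k, ε k = min (π k) (γ * σ k))
    (p : ℝ) (hp : p = (∑ k, σ k * ε k) ^ 2 / (∑ k, (ε k) ^ 2))
    (hpγ : (∑ k, σ k * ε k) / γ ≤ p) :
    (∑ k, σ k * ε k) * (∑ k, σ k * (π k) ^ 2 / ε k) ≤ p := by
  have hn : 0 < n := by
    rcases Nat.eq_zero_or_pos n with h | h
    · subst h; simp at hπ
    · exact h
  have : Nonempty (Fin n) := ⟨⟨0, hn⟩⟩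
  have hεpos : ∀ k, 0 < ε k := fun k => by
    rw [hε]; exact lt_min (hπpos k) (mul_pos hγ (hσpos k))
  set S : ℝ := ∑ k, σ k * ε k with hSdef
  set E : ℝ := ∑ k, (ε k) ^ 2 with hEdef
  have hS : 0 < S :=
    Finset.sum_pos (fun k _ => mul_pos (hσpos k) (hεpos k)) Finset.univ_nonempty
  have hE : 0 < E :=
    Finset.sum_pos (fun k _ => pow_pos (hεpos k) 2) Finset.univ_nonempty
  have hE1 : E ≤ 1 := by
    rw [← hπ]
    apply Finset.sum_le_sum
    intro k _
    have h1 : ε k ≤ π k := by rw [hε]; exact min_le_left _ _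
    exact pow_le_pow_left₀ (hεpos k).le h1 2
  have hEγ : E ≤ γ * S := by
    rw [Finset.mul_sum]
    apply Finset.sum_le_sum
    intro k _
    have h1 : ε k ≤ γ * σ k := by rw [hε]; exact min_le_right _ _
    calc (ε k) ^ 2 = ε k * ε k := sq (ε k)
    _ ≤ (γ * σ k) * ε k := by
        exact mul_le_mul_of_nonneg_right h1 (hεpos k).le
    _ = γ * (σ k * ε k) := by ring
  have hid : (∑ k, σ k * (π k) ^ 2 / ε k) = S + (1 - E) / γ := by
    rw [← hπ, hSdef, hEdef, ← Finset.sum_sub_distrib, Finset.sum_div,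
      ← Finset.sum_add_distrib]
    apply Finset.sum_congr rfl
    intro k _
    have hγ0 : γ ≠ 0 := hγ.ne'
    rcases le_total (π k) (γ * σ k) with h | h
    · rw [hε k, min_eq_left h]
      have hπ0 : π k ≠ 0 := (hπpos k).ne'
      field_simp
      ring
    · rw [hε k, min_eq_right h]
      have hσ0 : σ k ≠ 0 := (hσpos k).ne'
      field_simp
      ring
  rw [hid, hp]
  rw [le_div_iff₀ hE]
  set t : ℝ := (1 - E) / γ with htdef
  have ht : t * γ = 1 - E := div_mul_cancel₀ _ hγ.ne'
  have ht0 : 0 ≤ t := div_nonneg (by linarith) hγ.le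
  nlinarith [mul_le_mul_of_nonneg_left hEγ (mul_nonneg ht0 hS.le), hS.le, hE.le]
end

section
/- Let θ ∈ (0, π/2], set t̃ = ⌈π/(4θ) − 1/2⌉ and θ̃ = π/(2(2t̃+1)). Then 1/2 ≤ sin(θ̃)/sin(θ) ≤ 1. -/
open Real Set

theorem stmt_13 (θ : ℝ) (hθ : 0 < θ) (hθ' : θ ≤ Real.pi / 2) :
    1 / 2 ≤ Real.sin (Real.pi / (2 * (2 * (⌈Real.pi / (4 * θ) - 1 / 2⌉₊ : ℝ) + 1)))
            / Real.sin θ ∧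
    Real.sin (Real.pi / (2 * (2 * (⌈Real.pi / (4 * θ) - 1 / 2⌉₊ : ℝ) + 1)))
            / Real.sin θ ≤ 1 := by
  have hπ := Real.pi_pos
  set t : ℕ := ⌈Real.pi / (4 * θ) - 1 / 2⌉₊ with ht
  set α : ℝ := Real.pi / (2 * (2 * (t:ℝ) + 1)) with hα
  have htnn : (0:ℝ) ≤ (t:ℝ) := Nat.cast_nonneg t
  have hden : (0:ℝ) < 2 * (2 * (t:ℝ) + 1) := by positivity
  have hαpos : 0 < α := by positivity
  have hsθ : 0 < Real.sin θ :=
    Real.sin_pos_of_pos_of_lt_pi hθ (lt_of_le_of_lt hθ' (by linarith))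
  -- α ≤ θ
  have hceil : Real.pi / (4 * θ) - 1 / 2 ≤ (t:ℝ) := Nat.le_ceil _
  have hπθ : Real.pi / (4 * θ) ≤ (t:ℝ) + 1 / 2 := by linarith
  have hπle : Real.pi ≤ 2 * (2 * (t:ℝ) + 1) * θ := by
    have := (div_le_iff₀ (by positivity : (0:ℝ) < 4 * θ)).mp hπθ
    nlinarith
  have hαθ : α ≤ θ := (div_le_iff₀ hden).mpr (by linarith)
  have hαle : α ≤ Real.pi / 2 := hαθ.trans hθ'
  have hsin_le : Real.sin α ≤ Real.sin θ :=
    Real.sin_le_sin_of_le_of_le_pi_div_two (by linarith) hθ' hαθ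
  constructor
  · -- lower bound
    rw [le_div_iff₀ hsθ]
    rcases Nat.lt_or_ge t 2 with htlt | htge
    · -- t = 0 or t = 1 : sin α ≥ 1/2 and sin θ ≤ 1
      have hs1 : Real.sin θ ≤ 1 := Real.sin_le_one θ
      have hhalf : (1:ℝ)/2 ≤ Real.sin α := by
        interval_cases t
        · simp only [hα, Nat.cast_zero]
          norm_num [Real.sin_pi_div_two]
        · have : α = Real.pi / 6 := by
            rw [hα]; norm_num
          rw [this, Real.sin_pi_div_six]
      nlinarith
    · -- t ≥ 2 : use concavity of sin
      have ht2 : (2:ℝ) ≤ (t:ℝ) := by exact_mod_cast htge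
      -- upper bound on θ from ceil minimality
      have hx0 : 0 ≤ Real.pi / (4 * θ) - 1 / 2 := by
        by_contra h
        push_neg at h
        have : t = 0 := by
          rw [ht, Nat.ceil_eq_zero]; exact h.le
        omega
      have hup : (t:ℝ) < Real.pi / (4 * θ) - 1 / 2 + 1 := Nat.ceil_lt_add_one hx0
      have hθup : (4 * (t:ℝ) - 2) * θ < Real.pi := by
        have := (lt_div_iff₀ (by positivity : (0:ℝ) < 4 * θ)).mp (by linarith : (t:ℝ) - 1/2 < Real.pi / (4*θ))
        nlinarith
      -- hence θ/2 ≤ α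
      have hhalfθ : θ / 2 ≤ α := by
        rw [hα, le_div_iff₀ hden]
        nlinarith
      -- concavity: sin α ≥ (α/θ) * sin θ
      have hb0 : 0 ≤ α / θ := by positivity
      have hb1 : α / θ ≤ 1 := (div_le_one hθ).mpr hαθ
      have hmem0 : (0:ℝ) ∈ Icc (0:ℝ) Real.pi := ⟨le_refl _, hπ.le⟩
      have hmemθ : θ ∈ Icc (0:ℝ) Real.pi := ⟨hθ.le, by linarith⟩
      have hconc := strictConcaveOn_sin_Icc.concaveOn.2 hmem0 hmemθ
        (by linarith : (0:ℝ) ≤ 1 - α / θ) hb0 (by ring)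
      have hcomb : (1 - α / θ) • (0:ℝ) + (α / θ) • θ = α := by
        rw [smul_eq_mul, smul_eq_mul, mul_zero, zero_add, div_mul_cancel₀ _ hθ.ne']
      rw [hcomb, Real.sin_zero, smul_zero, zero_add, smul_eq_mul] at hconc
      -- α/θ ≥ 1/2
      have hbh : (1:ℝ)/2 ≤ α / θ := by
        rw [le_div_iff₀ hθ]; linarith
      nlinarith
  · rw [div_le_one hsθ]; exact hsin_le
end

section
/- Let γ ↦ ε(γ) be defined by ε(γ)_k = min(π_k, γσ_k) for unit vectors π, σ ∈ ℝ^n with strictly positive entries. Then the map γ ↦ ‖ε(γ)‖₂ is monotonically nondecreasing on (0, ∞), and the map γ ↦ p(γ) := (σᵀ·ε(γ)/‖ε(γ)‖₂)² is monotonically nonincreasing on [γ_min, γ_max], where γ_min = min_k π_k/σ_k and γ_max = max_k π_k/σ_k. -/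
set_option maxHeartbeats 1000000


theorem stmt_19 (n : ℕ) (hn : 0 < n) (π σ : Fin n → ℝ)
    (hπ : ∑ k, (π k) ^ 2 = 1) (hσ : ∑ k, (σ k) ^ 2 = 1)
    (hπpos : ∀ k, 0 < π k) (hσpos : ∀ k, 0 < σ k) :
    have : Nonempty (Fin n) := Fin.pos_iff_nonempty.mp hn
    (∀ γ₁ γ₂ : ℝ, 0 < γ₁ → γ₁ ≤ γ₂ →
      Real.sqrt (∑ k, (min (π k) (γ₁ * σ k)) ^ 2)
        ≤ Real.sqrt (∑ k, (min (π k) (γ₂ * σ k)) ^ 2)) ∧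
    (∀ γ₁ γ₂ : ℝ, (⨅ j, π j / σ j) ≤ γ₁ → γ₁ ≤ γ₂ → γ₂ ≤ (⨆ j, π j / σ j) →
      (∑ k, σ k * min (π k) (γ₂ * σ k)) ^ 2 / (∑ k, (min (π k) (γ₂ * σ k)) ^ 2)
        ≤ (∑ k, σ k * min (π k) (γ₁ * σ k)) ^ 2 /
          (∑ k, (min (π k) (γ₁ * σ k)) ^ 2)) := by
  have hne : Nonempty (Fin n) := Fin.pos_iff_nonempty.mp hn
  refine ⟨?_, ?_⟩
  · -- Part 1: monotonicity of the norm
    intro γ₁ γ₂ hγ₁ h12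
    apply Real.sqrt_le_sqrt
    apply Finset.sum_le_sum
    intro k _
    have h0 : 0 ≤ min (π k) (γ₁ * σ k) :=
      le_min (hπpos k).le (mul_nonneg hγ₁.le (hσpos k).le)
    have hle : min (π k) (γ₁ * σ k) ≤ min (π k) (γ₂ * σ k) :=
      min_le_min le_rfl (mul_le_mul_of_nonneg_right h12 (hσpos k).le)
    exact pow_le_pow_left₀ h0 hle 2
  · -- Part 2: monotonicity of p(γ)
    intro γ₁ γ₂ hlow h12 hhigh
    -- γ₁ is positive
    have hγ₁ : 0 < γ₁ := by
      obtain ⟨i, hi⟩ := Finite.exists_min (fun j => π j / σ j)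
      have hinf : π i / σ i ≤ ⨅ j, π j / σ j := le_ciInf hi
      exact lt_of_lt_of_le (div_pos (hπpos i) (hσpos i)) (hinf.trans hlow)
    have hγ₂ : 0 < γ₂ := lt_of_lt_of_le hγ₁ h12
    set a : Fin n → ℝ := fun k => min (π k) (γ₁ * σ k) with ha
    set b : Fin n → ℝ := fun k => min (π k) (γ₂ * σ k) with hb
    have hapos : ∀ k, 0 < a k := fun k =>
      lt_min (hπpos k) (mul_pos hγ₁ (hσpos k))
    have hab : ∀ k, a k ≤ b k := fun k =>
      min_le_min le_rfl (mul_le_mul_of_nonneg_right h12 (hσpos k).le)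
    set c : Fin n → ℝ := fun k => b k - a k with hc
    have hcnonneg : ∀ k, 0 ≤ c k := fun k => sub_nonneg.mpr (hab k)
    set f : ℝ := ∑ k, σ k * a k with hf
    set G : ℝ := ∑ k, (a k) ^ 2 with hG
    set D : ℝ := ∑ k, σ k * c k with hD
    set T : ℝ := ∑ k, (c k) ^ 2 with hT
    set S : Finset (Fin n) := Finset.univ.filter (fun k => γ₁ * σ k ≤ π k) with hS
    set β : ℝ := ∑ k ∈ S, (σ k) ^ 2 with hβ
    -- basic positivity
    have hfpos : 0 < f := Finset.sum_pos
      (fun k _ => mul_pos (hσpos k) (hapos k)) Finset.univ_nonempty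
    have hGpos : 0 < G := Finset.sum_pos
      (fun k _ => pow_pos (hapos k) 2) Finset.univ_nonempty
    have hDnonneg : 0 ≤ D := Finset.sum_nonneg
      (fun k _ => mul_nonneg (hσpos k).le (hcnonneg k))
    -- S is nonempty: take the index maximizing π/σ
    have hβpos : 0 < β := by
      obtain ⟨i, hi⟩ := Finite.exists_max (fun j => π j / σ j)
      have hsup : (⨆ j, π j / σ j) ≤ π i / σ i := ciSup_le hi
      have h1 : γ₁ * σ i ≤ π i := by
        have : γ₁ ≤ π i / σ i := h12.trans (hhigh.trans hsup)
        calc γ₁ * σ i ≤ (π i / σ i) * σ i :=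
              mul_le_mul_of_nonneg_right this (hσpos i).le
          _ = π i := div_mul_cancel₀ _ (hσpos i).ne'
      have hiS : i ∈ S := Finset.mem_filter.mpr ⟨Finset.mem_univ i, h1⟩
      exact Finset.sum_pos' (fun k _ => sq_nonneg _) ⟨i, hiS, pow_pos (hσpos i) 2⟩
    -- c vanishes off S
    have hc0 : ∀ k, k ∉ S → c k = 0 := by
      intro k hk
      have hk' : ¬ (γ₁ * σ k ≤ π k) := by
        simpa [hS, Finset.mem_filter] using hk
      have h1 : π k ≤ γ₁ * σ k := (not_le.mp hk').le
      have h2 : π k ≤ γ₂ * σ k :=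
        h1.trans (mul_le_mul_of_nonneg_right h12 (hσpos k).le)
      simp [hc, ha, hb, min_eq_left h1, min_eq_left h2]
    -- a = γ₁ σ on S
    have haS : ∀ k ∈ S, a k = γ₁ * σ k := by
      intro k hk
      have := (Finset.mem_filter.mp hk).2
      simp [ha, min_eq_right this]
    -- fact 1 : G ≤ γ₁ * f
    have h1 : G ≤ γ₁ * f := by
      rw [hG, hf, Finset.mul_sum]
      apply Finset.sum_le_sum
      intro k _
      have : a k ≤ γ₁ * σ k := min_le_right _ _
      have := mul_le_mul_of_nonneg_right this (hapos k).le
      nlinarith [hapos k]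
    -- fact 2 : β * G ≤ f ^ 2
    have h2 : β * G ≤ f ^ 2 := by
      have hGsplit : G = (∑ k ∈ S, (a k) ^ 2) + ∑ k ∈ Sᶜ, (a k) ^ 2 :=
        (Finset.sum_add_sum_compl S _).symm
      have hfsplit : f = (∑ k ∈ S, σ k * a k) + ∑ k ∈ Sᶜ, σ k * a k :=
        (Finset.sum_add_sum_compl S _).symm
      have hGS : (∑ k ∈ S, (a k) ^ 2) = γ₁ ^ 2 * β := by
        rw [hβ, Finset.mul_sum]
        apply Finset.sum_congr rfl
        intro k hk; rw [haS k hk]; ring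
      have hfS : (∑ k ∈ S, σ k * a k) = γ₁ * β := by
        rw [hβ, Finset.mul_sum]
        apply Finset.sum_congr rfl
        intro k hk; rw [haS k hk]; ring
      set G' : ℝ := ∑ k ∈ Sᶜ, (a k) ^ 2 with hG'
      set f' : ℝ := ∑ k ∈ Sᶜ, σ k * a k with hf'
      have hG'f' : G' ≤ γ₁ * f' := by
        rw [hG', hf', Finset.mul_sum]
        apply Finset.sum_le_sum
        intro k hk
        have hk' : ¬ (γ₁ * σ k ≤ π k) := by
          have := Finset.mem_compl.mp hk
          simpa [hS, Finset.mem_filter] using this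
        have hle : a k ≤ γ₁ * σ k := min_le_right _ _
        have := mul_le_mul_of_nonneg_right hle (hapos k).le
        nlinarith [hapos k]
      have hf'nonneg : 0 ≤ f' := Finset.sum_nonneg
        (fun k _ => mul_nonneg (hσpos k).le (hapos k).le)
      have hβnn : 0 ≤ β := hβpos.le
      have hγβf' : β * G' ≤ γ₁ * β * f' :=
        (mul_le_mul_of_nonneg_left hG'f' hβnn).trans_eq (by ring)
      rw [hGsplit, hfsplit, hGS, hfS]
      nlinarith [mul_nonneg (mul_nonneg hγ₁.le hβnn) hf'nonneg, sq_nonneg f']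
    -- fact 3 : Cauchy–Schwarz  D^2 ≤ β * T
    have h3 : D ^ 2 ≤ β * T := by
      have hDS : D = ∑ k ∈ S, σ k * c k := by
        rw [hD]
        rw [← Finset.sum_add_sum_compl S (fun k => σ k * c k)]
        have : ∑ k ∈ Sᶜ, σ k * c k = 0 :=
          Finset.sum_eq_zero (fun k hk => by
            rw [hc0 k (Finset.mem_compl.mp hk)]; ring)
        rw [this, add_zero]
      have hCS := Finset.sum_mul_sq_le_sq_mul_sq S σ c
      have hTS : ∑ k ∈ S, (c k) ^ 2 ≤ T := by
        rw [hT]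
        exact Finset.sum_le_sum_of_subset_of_nonneg (Finset.subset_univ S)
          (fun k _ _ => sq_nonneg _)
      calc D ^ 2 = (∑ k ∈ S, σ k * c k) ^ 2 := by rw [hDS]
        _ ≤ (∑ k ∈ S, (σ k) ^ 2) * ∑ k ∈ S, (c k) ^ 2 := hCS
        _ ≤ β * T := mul_le_mul_of_nonneg_left hTS hβpos.le
    -- decomposition of the γ₂ quantities
    have hfb : (∑ k, σ k * b k) = f + D := by
      rw [hf, hD, ← Finset.sum_add_distrib]
      apply Finset.sum_congr rfl
      intro k _; simp [hc]; ring
    have hac : ∀ k, a k * c k = γ₁ * (σ k * c k) := by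
      intro k
      by_cases hk : γ₁ * σ k ≤ π k
      · have : a k = γ₁ * σ k := by simp [ha, min_eq_right hk]
        rw [this]; ring
      · have : c k = 0 := hc0 k (by simp [hS, Finset.mem_filter, hk])
        rw [this]; ring
    have hGb : (∑ k, (b k) ^ 2) = G + 2 * γ₁ * D + T := by
      have hb' : ∀ k, (b k) ^ 2 = (a k) ^ 2 + 2 * (a k * c k) + (c k) ^ 2 := by
        intro k; simp [hc]; ring
      have : (∑ k, (b k) ^ 2)
          = ∑ k, ((a k) ^ 2 + 2 * (γ₁ * (σ k * c k)) + (c k) ^ 2) := by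
        apply Finset.sum_congr rfl
        intro k _; rw [hb' k, hac k]
      rw [this]
      rw [Finset.sum_add_distrib, Finset.sum_add_distrib, ← hG, ← hT]
      congr 1
      rw [← Finset.mul_sum, ← Finset.mul_sum, ← hD]
      ring
    -- final inequality
    have hTnonneg : 0 ≤ T := Finset.sum_nonneg (fun k _ => sq_nonneg _)
    have hG2pos : 0 < G + 2 * γ₁ * D + T := by
      have : 0 ≤ 2 * γ₁ * D := by positivity
      linarith
    rw [hfb, hGb]
    rw [div_le_div_iff₀ hG2pos hGpos]
    have m1 : 2 * β * f * D * G ≤ 2 * β * f * D * (γ₁ * f) :=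
      mul_le_mul_of_nonneg_left h1 (by positivity)
    have m2 : D ^ 2 * (β * G) ≤ D ^ 2 * f ^ 2 :=
      mul_le_mul_of_nonneg_left h2 (sq_nonneg D)
    have m3 : f ^ 2 * D ^ 2 ≤ f ^ 2 * (β * T) :=
      mul_le_mul_of_nonneg_left h3 (sq_nonneg f)
    have key : β * ((f + D) ^ 2 * G) ≤ β * (f ^ 2 * (G + 2 * γ₁ * D + T)) := by
      nlinarith [m1, m2, m3]
    exact le_of_mul_le_mul_left key hβpos
end
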